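/- Let M > 1, J̃₀ ∈ (0, (M-1)/2), and let J̃ : [0,T) → (0,∞) be continuous and satisfy J̃(t) ≤ J̃₀ + ((1-M)M²/2)·(1 - 2J̃₀/(M-1))·∫₀ᵗ J̃(s)⁻¹ ds for all t ∈ [0,T). Then T is finite; more precisely T ≤ J̃₀²/((M-1)M²(1 - 2J̃₀/(M-1))). -/

import Mathlib

open Set MeasureTheory intervalIntegral

/-- Finite-time blow-up ODE argument: if a positive continuous J̃ on [0,T) satisfies
the integral inequality, then T ≤ J̃₀² / ((M-1)M²(1 - 2J̃₀/(M-1))). -/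
theorem stmt_11 (J : ℝ → ℝ) (M J₀ T : ℝ)
    (hM : 1 < M) (hJ₀ : 0 < J₀) (hJ₀' : J₀ < (M - 1) / 2)
    (hpos : ∀ t ∈ Set.Ico (0 : ℝ) T, 0 < J t)
    (hcont : ContinuousOn J (Set.Ico 0 T))
    (hJ0 : J 0 = J₀)
    (hineq : ∀ t ∈ Set.Ico (0 : ℝ) T,
      J t ≤ J₀ + ((1 - M) * M ^ 2 / 2) * (1 - 2 * J₀ / (M - 1)) *
        ∫ s in (0 : ℝ)..t, (J s)⁻¹) :
    T ≤ J₀ ^ 2 / ((M - 1) * M ^ 2 * (1 - 2 * J₀ / (M - 1))) := by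
  have hM1 : (0:ℝ) < M - 1 := by linarith
  set c : ℝ := (M - 1) * M ^ 2 / 2 * (1 - 2 * J₀ / (M - 1)) with hc
  have hfrac : 2 * J₀ / (M - 1) < 1 := by
    rw [div_lt_one hM1]; linarith
  have hcpos : 0 < c := by
    apply mul_pos
    · exact div_pos (mul_pos hM1 (by positivity)) two_pos
    · linarith
  set K : ℝ → ℝ := fun u => J₀ - c * ∫ s in (0:ℝ)..u, (J s)⁻¹ with hK
  have hKineq : ∀ t ∈ Set.Ico (0:ℝ) T, J t ≤ K t := by
    intro t ht
    have h1 := hineq t ht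
    have h2 : ((1 - M) * M ^ 2 / 2) * (1 - 2 * J₀ / (M - 1)) = -c := by rw [hc]; ring
    rw [h2] at h1
    simpa [hK, neg_mul, ← sub_eq_add_neg] using h1
  -- main claim
  have key : ∀ t ∈ Set.Ico (0:ℝ) T, t ≤ J₀ ^ 2 / (2 * c) := by
    intro t ht
    obtain ⟨ht0, htT⟩ := ht
    have hsub : Icc (0:ℝ) t ⊆ Ico 0 T := fun x hx => ⟨hx.1, lt_of_le_of_lt hx.2 htT⟩
    have hcontinv : ContinuousOn (fun s => (J s)⁻¹) (Icc 0 t) :=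
      (hcont.mono hsub).inv₀ (fun x hx => (hpos x (hsub hx)).ne')
    have hintu : ∀ u ∈ Icc (0:ℝ) t, IntervalIntegrable (fun s => (J s)⁻¹) volume 0 u := by
      intro u hu
      apply ContinuousOn.intervalIntegrable
      apply hcontinv.mono
      rw [uIcc_of_le hu.1]
      exact Icc_subset_Icc le_rfl hu.2
    -- continuity of K on Icc 0 t
    have hKcont : ContinuousOn K (Icc 0 t) := by
      apply continuousOn_const.sub
      apply continuousOn_const.mul
      have := intervalIntegral.continuousOn_primitive_interval
        (f := fun s => (J s)⁻¹) (a := (0:ℝ)) (b := t) (μ := volume)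
        (hcontinv.integrableOn_compact isCompact_Icc |>.mono_set
          (by rw [uIcc_of_le ht0]))
      rwa [uIcc_of_le ht0] at this
    set F : ℝ → ℝ := fun u => K u ^ 2 + 2 * c * u with hF
    have hFderiv : ∀ s ∈ Ioo (0:ℝ) t, HasDerivAt F (2 * K s * (-(c * (J s)⁻¹)) + 2 * c) s := by
      intro s hs
      have hsmem : s ∈ Ioo (0:ℝ) T := ⟨hs.1, lt_trans hs.2 htT⟩
      have hIoo : ContinuousOn (fun x => (J x)⁻¹) (Ioo (0:ℝ) T) :=
        (hcont.mono Ioo_subset_Ico_self).inv₀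
          (fun x hx => (hpos x (Ioo_subset_Ico_self hx)).ne')
      have hG : HasDerivAt (fun u => ∫ x in (0:ℝ)..u, (J x)⁻¹) ((J s)⁻¹) s := by
        apply intervalIntegral.integral_hasDerivAt_right
          (hintu s ⟨le_of_lt hs.1, le_of_lt hs.2⟩)
        · exact ContinuousOn.stronglyMeasurableAtFilter isOpen_Ioo hIoo s hsmem
        · exact hIoo.continuousAt (isOpen_Ioo.mem_nhds hsmem)
      have hKd : HasDerivAt K (-(c * (J s)⁻¹)) s := by
        simpa using ((hG.const_mul c).const_sub J₀)
      have : HasDerivAt (fun u => K u ^ 2) (2 * K s * (-(c * (J s)⁻¹))) s := by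
        simpa [mul_comm] using (hKd.fun_pow 2)
      simpa [hF] using this.fun_add ((hasDerivAt_id s).const_mul (2 * c))
    have hFanti : AntitoneOn F (Icc 0 t) := by
      apply antitoneOn_of_deriv_nonpos (convex_Icc 0 t)
      · exact (hKcont.pow 2).add (continuousOn_const.mul continuousOn_id)
      · intro x hx
        rw [interior_Icc] at hx
        exact ((hFderiv x hx).differentiableAt).differentiableWithinAt
      · intro x hx
        rw [interior_Icc] at hx
        rw [(hFderiv x hx).deriv]
        have hJx : 0 < J x := hpos x (hsub ⟨le_of_lt hx.1, le_of_lt hx.2⟩)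
        have hKx : J x ≤ K x := hKineq x (hsub ⟨le_of_lt hx.1, le_of_lt hx.2⟩)
        have h1 : 2 * J x * (c * (J x)⁻¹) = 2 * c := by field_simp
        have h2 : 2 * J x * (c * (J x)⁻¹) ≤ 2 * K x * (c * (J x)⁻¹) := by
          have h3 := mul_pos hcpos (inv_pos.mpr hJx)
          nlinarith [mul_nonneg (sub_nonneg.mpr hKx) h3.le]
        linarith
    rcases eq_or_lt_of_le ht0 with h0 | h0
    · have : (0:ℝ) ≤ J₀ ^ 2 / (2 * c) := by positivity
      linarith [h0 ▸ this]
    · have hFt : F t ≤ F 0 := hFanti ⟨le_rfl, ht0⟩ ⟨ht0, le_rfl⟩ ht0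
      have hF0 : F 0 = J₀ ^ 2 := by simp [hF, hK]
      have hFt' : K t ^ 2 + 2 * c * t ≤ J₀ ^ 2 := by rw [← hF0]; exact hFt
      have h2 : 2 * c * t ≤ J₀ ^ 2 := by nlinarith [sq_nonneg (K t)]
      rw [le_div_iff₀ (by positivity)]
      linarith
  have hB : J₀ ^ 2 / ((M - 1) * M ^ 2 * (1 - 2 * J₀ / (M - 1))) = J₀ ^ 2 / (2 * c) := by
    rw [hc]; ring_nf
  rw [hB]
  by_contra h
  push_neg at h
  set B := J₀ ^ 2 / (2 * c) with hBdef
  have hB0 : 0 ≤ B := by positivity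
  have : (B + T) / 2 ∈ Set.Ico (0:ℝ) T := ⟨by linarith, by linarith⟩
  have := key _ this
  linarith
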